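/- Let V ∈ ℝ^{k×m} be a matrix of rank k, and let S be a set of k column indices maximizing |det(V_S)| over all k-subsets of column indices, where V_S denotes the k×k submatrix of the columns of V indexed by S. Then det(V_S) ≠ 0, and for every column index i, the unique vector M_i ∈ ℝ^k solving V_S M_i = V_i satisfies |M_i(j)| ≤ 1 for every coordinate j; moreover M_i(j) = det(V_S^j)/det(V_S), where V_S^j is obtained from V_S by replacing its j-th column with V_i. -/

import Mathlib

open Matrix

/-- Let `V ∈ ℝ^{k×m}` have rank `k` and let `S` be a set of `k` column indices
maximizing `|det(V_S)|` over all `k`-subsets of columns. Then `det(V_S) ≠ 0`, for every column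
index `i` the system `V_S M = V_i` has a unique solution `M_i`, every solution has all
coordinates of absolute value at most `1`, and its `j`-th coordinate equals
`det(V_S^j) / det(V_S)` where `V_S^j` replaces the `j`-th column of `V_S` by `V_i`. -/
theorem max_det_submatrix_cramer_coefficients_le_one
    {k m : ℕ} (hk : 1 ≤ k) (V : Matrix (Fin k) (Fin m) ℝ) (hrank : V.rank = k)
    (S : Fin k → Fin m) (hS : Function.Injective S)
    (hmax : ∀ T : Fin k → Fin m, Function.Injective T →
      |(V.submatrix id T).det| ≤ |(V.submatrix id S).det|) :
    (V.submatrix id S).det ≠ 0 ∧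
    ∀ i : Fin m,
      (∃! M : Fin k → ℝ, (V.submatrix id S) *ᵥ M = fun r => V r i) ∧
      ∀ M : Fin k → ℝ, ((V.submatrix id S) *ᵥ M = fun r => V r i) →
        ∀ j : Fin k,
          |M j| ≤ 1 ∧
          M j = ((V.submatrix id S).updateCol j (fun r => V r i)).det /
              (V.submatrix id S).det := by
  -- Step 1: there exists an injective T with nonzero determinant.
  have hspan : Submodule.span ℝ (Set.range Vᵀ) = ⊤ := by
    have h1 := V.rank_eq_finrank_span_cols
    rw [hrank] at h1
    have : Module.finrank ℝ (Fin k → ℝ) = k := by simp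
    exact Submodule.eq_top_of_finrank_eq (by rw [this]; exact h1.symm)
  obtain ⟨s, hs_sub, hs_span, hs_li⟩ := exists_linearIndependent ℝ (Set.range Vᵀ)
  rw [hspan] at hs_span
  have hsfin : s.Finite := hs_li.setFinite
  haveI : Fintype s := hsfin.fintype
  have hcard : s.toFinset.card = k := by
    have h2 := finrank_span_set_eq_card hs_li
    rw [hs_span, finrank_top] at h2
    have hk' : Module.finrank ℝ (Fin k → ℝ) = k := by simp
    rw [hk'] at h2
    exact h2.symm
  have e : Fin k ≃ s := by
    apply Fintype.equivOfCardEq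
    rw [Fintype.card_fin, ← Set.toFinset_card, hcard]
  have hmem : ∀ j : Fin k, (e j).1 ∈ Set.range Vᵀ := fun j => hs_sub (e j).2
  choose T hT using hmem
  have hTcol : ∀ j, (V.submatrix id T)ᵀ j = (e j).1 := by
    intro j
    ext r
    have := congrFun (hT j) r
    simpa [Matrix.transpose_apply] using this
  have hTli : LinearIndependent ℝ (fun j => (V.submatrix id T)ᵀ j) := by
    have h3 := hs_li.comp e e.injective
    have heq : (fun j => (V.submatrix id T)ᵀ j) = (Subtype.val ∘ e) := by
      funext j; exact hTcol j
    rw [heq]; exact h3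
  have hTinj : Function.Injective T := by
    intro a b hab
    have : (e a).1 = (e b).1 := by
      rw [← hTcol a, ← hTcol b]
      ext r
      simp [Matrix.transpose_apply, hab]
    exact e.injective (Subtype.ext this)
  have hTdet : (V.submatrix id T).det ≠ 0 := by
    have hU := Matrix.linearIndependent_cols_iff_isUnit.mp hTli
    exact ((Matrix.isUnit_iff_isUnit_det _).mp hU).ne_zero
  set A := V.submatrix id S with hA
  have hdet : A.det ≠ 0 := by
    intro h0
    have := hmax T hTinj
    rw [h0] at this
    simp only [abs_zero] at this
    exact hTdet (abs_nonpos_iff.mp this)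
  have hUnit : IsUnit A := (Matrix.isUnit_iff_isUnit_det A).mpr (isUnit_iff_ne_zero.mpr hdet)
  refine ⟨hdet, fun i => ?_⟩
  -- determinant bound for update columns
  have hub : ∀ j : Fin k, |(A.updateCol j (fun r => V r i)).det| ≤ |A.det| := by
    intro j
    have hup : A.updateCol j (fun r => V r i) = V.submatrix id (Function.update S j i) := by
      ext a b
      by_cases hb : b = j
      · subst hb; simp [Matrix.updateCol_apply, Function.update_apply]
      · simp [hA, Matrix.updateCol_apply, Function.update_apply, hb]
    rw [hup]
    by_cases hinj : Function.Injective (Function.update S j i)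
    · exact hmax _ hinj
    · have : (V.submatrix id (Function.update S j i)).det = 0 := by
        rw [Function.not_injective_iff] at hinj
        obtain ⟨a, b, hab, hne⟩ := hinj
        apply Matrix.det_zero_of_column_eq hne
        intro r
        simp [Matrix.submatrix_apply, hab]
      rw [this, abs_zero]
      exact abs_nonneg _
  constructor
  · -- unique solution
    refine ⟨A⁻¹ *ᵥ (fun r => V r i), ?_, ?_⟩
    · show A *ᵥ (A⁻¹ *ᵥ fun r => V r i) = fun r => V r i
      rw [Matrix.mulVec_mulVec, Matrix.mul_nonsing_inv A (isUnit_iff_ne_zero.mpr hdet),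
        Matrix.one_mulVec]
    · intro y hy
      have hInj := Matrix.mulVec_injective_iff_isUnit.mpr hUnit
      apply hInj
      rw [hy, Matrix.mulVec_mulVec, Matrix.mul_nonsing_inv A (isUnit_iff_ne_zero.mpr hdet),
        Matrix.one_mulVec]
  · intro M hM j
    -- Cramer's rule
    have hcr : A.det • M = Matrix.cramer A (fun r => V r i) := by
      rw [Matrix.cramer_eq_adjugate_mulVec, ← hM, Matrix.mulVec_mulVec,
        Matrix.adjugate_mul, Matrix.smul_mulVec, Matrix.one_mulVec]
    have hcrj : A.det * M j = (A.updateCol j (fun r => V r i)).det := by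
      have := congrFun hcr j
      simpa [Matrix.cramer_apply] using this
    have hMj : M j = (A.updateCol j (fun r => V r i)).det / A.det := by
      field_simp
      linarith [hcrj]
    refine ⟨?_, hMj⟩
    rw [hMj, abs_div]
    rw [div_le_one (by positivity)]
    exact hub j
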